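/- Let M be a maximum matching of a finite bipartite graph G = (V, F, E) with coarse decomposition (T_I, T_C, T_O). Then M ∩ ((T_C ∩ F) × (T_C ∩ V)) is a perfect matching of the subgraph of G induced by T_C ∩ F and T_C ∩ V, and this induced subgraph is self-contained. -/

import Mathlib

variable {F V : Type*} [Fintype F] [Fintype V] [DecidableEq F] [DecidableEq V]

/-- `M` is a matching of the bipartite graph with edge set `E`:
`M ⊆ E` and no two edges of `M` share an endpoint. -/
def IsMatching (E M : Finset (F × V)) : Prop :=
  M ⊆ E ∧ (∀ e ∈ M, ∀ e' ∈ M, e.1 = e'.1 → e = e') ∧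
    ∀ e ∈ M, ∀ e' ∈ M, e.2 = e'.2 → e = e'

/-- `M` is a maximum matching: a matching of greatest cardinality. -/
def IsMaxMatching (E M : Finset (F × V)) : Prop :=
  IsMatching E M ∧ ∀ M' : Finset (F × V), IsMatching E M' → M'.card ≤ M.card

/-- The (symmetric) adjacency relation of the bipartite graph on `F ⊕ V`. -/
def sumAdj (E : Finset (F × V)) : (F ⊕ V) → (F ⊕ V) → Prop
  | Sum.inl f, Sum.inr v => (f, v) ∈ E
  | Sum.inr v, Sum.inl f => (f, v) ∈ E
  | _, _ => False

/-- The pair of consecutive path vertices forms an edge belonging to `M`. -/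
def pairInM (M : Finset (F × V)) : (F ⊕ V) × (F ⊕ V) → Prop
  | (Sum.inl f, Sum.inr v) => (f, v) ∈ M
  | (Sum.inr v, Sum.inl f) => (f, v) ∈ M
  | _ => False

/-- `l` is an `M`-alternating path in the bipartite graph with edge set `E`:
a nonempty sequence of distinct vertices in which consecutive vertices are joined
by edges of `E` lying alternately inside and outside `M`. -/
def IsAltPath (E M : Finset (F × V)) (l : List (F ⊕ V)) : Prop :=
  l ≠ [] ∧ l.Nodup ∧ l.Chain' (sumAdj E) ∧
    (l.zip l.tail).Chain' fun e e' => pairInM M e ↔ ¬ pairInM M e'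

/-- `v ∈ V` is not an endpoint of any edge of `M`. -/
def VUnmatched (M : Finset (F × V)) (v : V) : Prop := ∀ f, (f, v) ∉ M

/-- `f ∈ F` is not an endpoint of any edge of `M`. -/
def FUnmatched (M : Finset (F × V)) (f : F) : Prop := ∀ v, (f, v) ∉ M

/-- The incomplete set `T_I`: all vertices reachable from some `M`-unmatched
vertex of `V` by a (possibly trivial) `M`-alternating path. -/
def incompleteSet (E M : Finset (F × V)) : Set (F ⊕ V) :=
  {x | ∃ v : V, VUnmatched M v ∧ ∃ l : List (F ⊕ V),
    IsAltPath E M l ∧ l.head? = some (Sum.inr v) ∧ l.getLast? = some x}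

/-- The overcomplete set `T_O`: all vertices reachable from some `M`-unmatched
vertex of `F` by a (possibly trivial) `M`-alternating path. -/
def overcompleteSet (E M : Finset (F × V)) : Set (F ⊕ V) :=
  {x | ∃ f : F, FUnmatched M f ∧ ∃ l : List (F ⊕ V),
    IsAltPath E M l ∧ l.head? = some (Sum.inl f) ∧ l.getLast? = some x}

/-- The complete set `T_C = (V ∪ F) \ (T_I ∪ T_O)`. -/
def completeSet (E M : Finset (F × V)) : Set (F ⊕ V) :=
  Set.univ \ (incompleteSet E M ∪ overcompleteSet E M)

/-- The equation-side part of the complete set: `T_C ∩ F`. -/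
def completeF (E M : Finset (F × V)) : Set F := {f | Sum.inl f ∈ completeSet E M}

/-- The variable-side part of the complete set: `T_C ∩ V`. -/
def completeV (E M : Finset (F × V)) : Set V := {v | Sum.inr v ∈ completeSet E M}

/-- Set-valued adjacency of `S ⊆ F` restricted to the vertex set `V'`. -/
def subAdjSet (E : Finset (F × V)) (V' : Set V) (S : Set F) : Set V :=
  {v | v ∈ V' ∧ ∃ f ∈ S, (f, v) ∈ E}

/-- `S` is a self-contained set of the subgraph with variable part `V'`. -/
def SCSetOn (E : Finset (F × V)) (V' : Set V) (S : Set F) : Prop :=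
  S.ncard = (subAdjSet E V' S).ncard ∧ ∀ S' ⊆ S, S'.ncard ≤ (subAdjSet E V' S').ncard

/-- The subgraph induced by `F'` and `V'` is self-contained. -/
def SCGraphOn (E : Finset (F × V)) (F' : Set F) (V' : Set V) : Prop :=
  F'.ncard = V'.ncard ∧ SCSetOn E V' F'

/-- `M'` is a matching of the (set of) edges `E'`. -/
def IsMatchingSet (E' M' : Set (F × V)) : Prop :=
  M' ⊆ E' ∧ (∀ e ∈ M', ∀ e' ∈ M', e.1 = e'.1 → e = e') ∧
    ∀ e ∈ M', ∀ e' ∈ M', e.2 = e'.2 → e = e'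

section Aux

variable {α : Type*}

/-- The list of consecutive pairs (edges) of a path. -/
def auxEdges (l : List α) : List (α × α) := l.zip l.tail

theorem auxEdges_cons_cons (a b : α) (t : List α) :
    auxEdges (a :: b :: t) = (a, b) :: auxEdges (b :: t) := rfl

theorem auxEdges_prefix : ∀ (l r : List α), auxEdges l <+: auxEdges (l ++ r)
  | [], r => by simp [auxEdges]
  | [a], r => by simp [auxEdges]
  | a :: b :: t, r => by
    have := auxEdges_prefix (b :: t) r
    obtain ⟨s, hs⟩ := this
    exact ⟨s, by simp [auxEdges_cons_cons, List.cons_append]; exact hs⟩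

theorem auxEdges_concat₂ : ∀ (l : List α) (a b : α),
    auxEdges (l ++ [a, b]) = auxEdges (l ++ [a]) ++ [(a, b)]
  | [], a, b => rfl
  | [c], a, b => rfl
  | c :: d :: t, a, b => by
    have := auxEdges_concat₂ (d :: t) a b
    simp only [List.cons_append, auxEdges_cons_cons] at *
    rw [this]

theorem auxEdges_getLast?_snd : ∀ (l : List α) (p : α × α),
    (auxEdges l).getLast? = some p → l.getLast? = some p.2
  | [], p => by simp [auxEdges]
  | [a], p => by simp [auxEdges]
  | a :: b :: t, p => by
    cases t with
    | nil =>
      intro h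
      simp [auxEdges] at h
      subst h; rfl
    | cons c t' =>
      intro h
      rw [auxEdges_cons_cons, auxEdges_cons_cons] at h
      rw [List.getLast?_cons_cons] at h
      have := auxEdges_getLast?_snd (b :: c :: t') p
        (by rw [auxEdges_cons_cons]; exact h)
      rw [List.getLast?_cons_cons]
      exact this

theorem head?_append_of_ne_nil' (l r : List α) (h : l ≠ []) :
    (l ++ r).head? = l.head? := by
  cases l with
  | nil => exact absurd rfl h
  | cons a t => rfl

end Aux

section AuxPath

variable {F V : Type*} [Fintype F] [Fintype V] [DecidableEq F] [DecidableEq V]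

theorem pairInM_adj {E M : Finset (F × V)} (hME : M ⊆ E) {a b : F ⊕ V}
    (h : pairInM M (a, b)) : sumAdj E a b := by
  cases a <;> cases b <;> simp [pairInM, sumAdj] at * <;> exact hME h

theorem alt_singleton (E M : Finset (F × V)) (x : F ⊕ V) :
    IsAltPath E M [x] :=
  ⟨List.cons_ne_nil _ _, List.nodup_singleton _, List.isChain_singleton _, by
    simp; exact List.isChain_nil⟩

theorem alt_prefix {E M : Finset (F × V)} {l₁ l₂ : List (F ⊕ V)}
    (h : IsAltPath E M (l₁ ++ l₂)) (h₁ : l₁ ≠ []) : IsAltPath E M l₁ := by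
  obtain ⟨-, hnd, hch, halt⟩ := h
  refine ⟨h₁, hnd.sublist (List.sublist_append_left _ _), hch.prefix ⟨l₂, rfl⟩, ?_⟩
  exact halt.prefix (auxEdges_prefix l₁ l₂)

/-- Extend an alternating path ending at `x` to one ending at `y`, where
`(x, y)` is a matched edge and `x`'s only matched neighbor is `y`. -/
theorem alt_reach_extend {E M : Finset (F × V)} (hME : M ⊆ E) {x y s : F ⊕ V}
    (hxy : pairInM M (x, y)) (huniq : ∀ z, pairInM M (z, x) → z = y)
    (h : ∃ l, IsAltPath E M l ∧ l.head? = some s ∧ l.getLast? = some x) :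
    ∃ l, IsAltPath E M l ∧ l.head? = some s ∧ l.getLast? = some y := by
  obtain ⟨l, hl, hh, hlast⟩ := h
  rcases Classical.em (y ∈ l) with hy | hy
  · obtain ⟨l₁, l₂, rfl⟩ := List.append_of_mem hy
    refine ⟨l₁ ++ [y], ?_, ?_, List.getLast?_concat⟩
    · have heq : l₁ ++ y :: l₂ = (l₁ ++ [y]) ++ l₂ := by simp
      exact alt_prefix (heq ▸ hl) (by simp)
    · cases l₁ with
      | nil => simpa using hh
      | cons a t => rw [← hh]; rfl
  · obtain ⟨hlne, hnd, hch, halt⟩ := hl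
    have hsplit : l.dropLast ++ [x] = l :=
      List.dropLast_append_getLast? x hlast
    refine ⟨l ++ [y], ⟨by simp, ?_, ?_, ?_⟩, ?_, List.getLast?_concat⟩
    · simp [List.nodup_append, hnd, hy]
      constructor <;> rintro a ha rfl <;> exact hy ha
    · refine List.isChain_append.2 ⟨hch, List.isChain_singleton _, ?_⟩
      intro z hz y' hy'
      simp only [List.head?_cons, Option.mem_def, Option.some.injEq] at hy'
      subst hy'
      have hz' : z = x := by
        rw [Option.mem_def, hlast] at hz; exact Option.some.inj hz.symm
      subst hz'
      exact pairInM_adj hME hxy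
    · have hrw : auxEdges (l ++ [y]) = auxEdges l ++ [(x, y)] := by
        conv_lhs => rw [← hsplit]
        rw [List.append_assoc]
        have : ([x] : List (F ⊕ V)) ++ [y] = [x, y] := rfl
        rw [this, auxEdges_concat₂, hsplit]
      show (auxEdges (l ++ [y])).Chain' _
      rw [hrw]
      refine List.isChain_append.2 ⟨halt, List.isChain_singleton _, ?_⟩
      intro p hp q hq
      obtain ⟨p1, p2⟩ := p
      simp only [List.head?_cons, Option.mem_def, Option.some.injEq] at hq
      subst hq
      simp only [Option.mem_def] at hp
      have hp2 : l.getLast? = some p2 := auxEdges_getLast?_snd l (p1, p2) hp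
      have hpx : p2 = x := by rw [hlast] at hp2; exact Option.some.inj hp2.symm
      subst hpx
      constructor
      · intro hpM
        have hp1 : p1 = y := huniq _ hpM
        have hpmem : (p1, p2) ∈ auxEdges l := by
          have h3 := List.dropLast_append_getLast? (p1, p2) hp
          rw [← h3]; simp
        have hmem : p1 ∈ l := (List.of_mem_zip hpmem).1
        exact absurd (hp1 ▸ hmem) hy
      · intro h'; exact absurd hxy h'
    · rw [head?_append_of_ne_nil' _ _ hlne]; exact hh

theorem incomplete_extend {E M : Finset (F × V)} (hME : M ⊆ E) {x y : F ⊕ V}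
    (hxy : pairInM M (x, y)) (huniq : ∀ z, pairInM M (z, x) → z = y)
    (h : x ∈ incompleteSet E M) : y ∈ incompleteSet E M := by
  obtain ⟨v0, hv0, hl⟩ := h
  exact ⟨v0, hv0, alt_reach_extend hME hxy huniq hl⟩

theorem overcomplete_extend {E M : Finset (F × V)} (hME : M ⊆ E) {x y : F ⊕ V}
    (hxy : pairInM M (x, y)) (huniq : ∀ z, pairInM M (z, x) → z = y)
    (h : x ∈ overcompleteSet E M) : y ∈ overcompleteSet E M := by
  obtain ⟨f0, hf0, hl⟩ := h
  exact ⟨f0, hf0, alt_reach_extend hME hxy huniq hl⟩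

end AuxPath

/-- `M ∩ ((T_C ∩ F) × (T_C ∩ V))` is a perfect matching of the
subgraph of `G` induced by `T_C ∩ F` and `T_C ∩ V`, and this induced subgraph
is self-contained. -/
theorem complete_subgraph_perfectly_matched_and_selfContained
    (E M : Finset (F × V)) (hM : IsMaxMatching E M) :
    IsMatchingSet
      {e : F × V | e ∈ E ∧ e.1 ∈ completeF E M ∧ e.2 ∈ completeV E M}
      {e : F × V | e ∈ M ∧ e.1 ∈ completeF E M ∧ e.2 ∈ completeV E M} ∧
    (∀ f ∈ completeF E M, ∃ v ∈ completeV E M, (f, v) ∈ M) ∧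
    (∀ v ∈ completeV E M, ∃ f ∈ completeF E M, (f, v) ∈ M) ∧
    SCGraphOn E (completeF E M) (completeV E M) := by
  classical
  obtain ⟨⟨hME, h1, h2⟩, -⟩ := hM
  -- membership characterizations
  have hcF : ∀ f : F, f ∈ completeF E M ↔
      Sum.inl f ∉ incompleteSet E M ∧ Sum.inl f ∉ overcompleteSet E M := by
    intro f
    simp [completeF, completeSet, not_or]
  have hcV : ∀ v : V, v ∈ completeV E M ↔
      Sum.inr v ∉ incompleteSet E M ∧ Sum.inr v ∉ overcompleteSet E M := by
    intro v
    simp [completeV, completeSet, not_or]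
  -- uniqueness helpers
  have huniqV : ∀ {f : F} {v : V}, (f, v) ∈ M →
      ∀ z, pairInM M (z, Sum.inr v) → z = Sum.inl f := by
    intro f v hfv z hz
    cases z with
    | inl f' =>
      have : (f', v) ∈ M := hz
      have := h2 _ this _ hfv rfl
      simp only [Prod.mk.injEq] at this
      rw [this.1]
    | inr v' => exact absurd hz (by simp [pairInM])
  have huniqF : ∀ {f : F} {v : V}, (f, v) ∈ M →
      ∀ z, pairInM M (z, Sum.inl f) → z = Sum.inr v := by
    intro f v hfv z hz
    cases z with
    | inr v' =>
      have : (f, v') ∈ M := hz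
      have := h1 _ this _ hfv rfl
      simp only [Prod.mk.injEq] at this
      rw [this.2]
    | inl f' => exact absurd hz (by simp [pairInM])
  -- every complete f is matched to a complete v
  have matchF : ∀ f ∈ completeF E M, ∃ v, (f, v) ∈ M ∧ v ∈ completeV E M := by
    intro f hf
    have hmatched : ∃ v, (f, v) ∈ M := by
      by_contra h
      push_neg at h
      have : Sum.inl f ∈ overcompleteSet E M :=
        ⟨f, h, [Sum.inl f], alt_singleton E M _, rfl, rfl⟩
      exact ((hcF f).1 hf).2 this
    obtain ⟨v, hv⟩ := hmatched
    refine ⟨v, hv, (hcV v).2 ⟨?_, ?_⟩⟩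
    · intro hin
      exact ((hcF f).1 hf).1 (incomplete_extend hME (show pairInM M (Sum.inr v, Sum.inl f) from hv)
        (huniqV hv) hin)
    · intro hin
      exact ((hcF f).1 hf).2 (overcomplete_extend hME (show pairInM M (Sum.inr v, Sum.inl f) from hv)
        (huniqV hv) hin)
  have matchV : ∀ v ∈ completeV E M, ∃ f, (f, v) ∈ M ∧ f ∈ completeF E M := by
    intro v hv
    have hmatched : ∃ f, (f, v) ∈ M := by
      by_contra h
      push_neg at h
      have : Sum.inr v ∈ incompleteSet E M :=
        ⟨v, h, [Sum.inr v], alt_singleton E M _, rfl, rfl⟩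
      exact ((hcV v).1 hv).1 this
    obtain ⟨f, hf⟩ := hmatched
    refine ⟨f, hf, (hcF f).2 ⟨?_, ?_⟩⟩
    · intro hin
      exact ((hcV v).1 hv).1 (incomplete_extend hME (show pairInM M (Sum.inl f, Sum.inr v) from hf)
        (huniqF hf) hin)
    · intro hin
      exact ((hcV v).1 hv).2 (overcomplete_extend hME (show pairInM M (Sum.inl f, Sum.inr v) from hf)
        (huniqF hf) hin)
  -- matched partner of a complete vertex is complete
  have matchC : ∀ e ∈ M, e.1 ∈ completeF E M → e.2 ∈ completeV E M := by
    rintro ⟨f, v⟩ he hf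
    obtain ⟨v', hv', hv'C⟩ := matchF f hf
    have : (f, v') = (f, v) := h1 _ hv' _ he rfl
    rwa [← (Prod.ext_iff.1 this).2]
  refine ⟨⟨?_, ?_, ?_⟩, ?_, ?_, ?_, ?_, ?_⟩
  · rintro e ⟨heM, h1', h2'⟩
    exact ⟨hME heM, h1', h2'⟩
  · rintro e ⟨heM, -, -⟩ e' ⟨heM', -, -⟩ h
    exact h1 _ heM _ heM' h
  · rintro e ⟨heM, -, -⟩ e' ⟨heM', -, -⟩ h
    exact h2 _ heM _ heM' h
  · intro f hf
    obtain ⟨v, hv, hvC⟩ := matchF f hf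
    exact ⟨v, hvC, hv⟩
  · intro v hv
    obtain ⟨f, hf, hfC⟩ := matchV v hv
    exact ⟨f, hfC, hf⟩
  -- cardinalities
  · set Mc := M.filter (fun e => e.1 ∈ completeF E M ∧ e.2 ∈ completeV E M) with hMc
    have hF : completeF E M = ↑(Mc.image Prod.fst) := by
      ext f
      simp only [Finset.coe_image, Set.mem_image, Finset.mem_coe, Finset.mem_filter, hMc]
      constructor
      · intro hf
        obtain ⟨v, hv, hvC⟩ := matchF f hf
        exact ⟨(f, v), ⟨hv, hf, hvC⟩, rfl⟩
      · rintro ⟨e, ⟨-, he, -⟩, rfl⟩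
        exact he
    have hV : completeV E M = ↑(Mc.image Prod.snd) := by
      ext v
      simp only [Finset.coe_image, Set.mem_image, Finset.mem_coe, Finset.mem_filter, hMc]
      constructor
      · intro hv
        obtain ⟨f, hf, hfC⟩ := matchV v hv
        exact ⟨(f, v), ⟨hf, hfC, hv⟩, rfl⟩
      · rintro ⟨e, ⟨-, -, he⟩, rfl⟩
        exact he
    rw [hF, hV, Set.ncard_coe_finset, Set.ncard_coe_finset,
      Finset.card_image_of_injOn, Finset.card_image_of_injOn]
    · intro e he e' he' h
      exact h2 _ (Finset.mem_filter.1 he).1 _ (Finset.mem_filter.1 he').1 h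
    · intro e he e' he' h
      exact h1 _ (Finset.mem_filter.1 he).1 _ (Finset.mem_filter.1 he').1 h
  · -- |completeF| = |N(completeF)|
    have hsub : subAdjSet E (completeV E M) (completeF E M) = completeV E M := by
      ext v
      constructor
      · rintro ⟨hv, -⟩; exact hv
      · intro hv
        obtain ⟨f, hf, hfC⟩ := matchV v hv
        exact ⟨hv, f, hfC, hME hf⟩
    rw [hsub]
    -- same cardinality argument as above
    set Mc := M.filter (fun e => e.1 ∈ completeF E M ∧ e.2 ∈ completeV E M) with hMc
    have hF : completeF E M = ↑(Mc.image Prod.fst) := by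
      ext f
      simp only [Finset.coe_image, Set.mem_image, Finset.mem_coe, Finset.mem_filter, hMc]
      constructor
      · intro hf
        obtain ⟨v, hv, hvC⟩ := matchF f hf
        exact ⟨(f, v), ⟨hv, hf, hvC⟩, rfl⟩
      · rintro ⟨e, ⟨-, he, -⟩, rfl⟩
        exact he
    have hV : completeV E M = ↑(Mc.image Prod.snd) := by
      ext v
      simp only [Finset.coe_image, Set.mem_image, Finset.mem_coe, Finset.mem_filter, hMc]
      constructor
      · intro hv
        obtain ⟨f, hf, hfC⟩ := matchV v hv
        exact ⟨(f, v), ⟨hf, hfC, hv⟩, rfl⟩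
      · rintro ⟨e, ⟨-, -, he⟩, rfl⟩
        exact he
    rw [hF, hV, Set.ncard_coe_finset, Set.ncard_coe_finset,
      Finset.card_image_of_injOn, Finset.card_image_of_injOn]
    · intro e he e' he' h
      exact h2 _ (Finset.mem_filter.1 he).1 _ (Finset.mem_filter.1 he').1 h
    · intro e he e' he' h
      exact h1 _ (Finset.mem_filter.1 he).1 _ (Finset.mem_filter.1 he').1 h
  · -- Hall condition
    intro S' hS'
    set Ms := M.filter (fun e => e.1 ∈ S') with hMs
    have hSeq : S' = ↑(Ms.image Prod.fst) := by
      ext f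
      simp only [Finset.coe_image, Set.mem_image, Finset.mem_coe, Finset.mem_filter, hMs]
      constructor
      · intro hf
        obtain ⟨v, hv, -⟩ := matchF f (hS' hf)
        exact ⟨(f, v), ⟨hv, hf⟩, rfl⟩
      · rintro ⟨e, ⟨-, he⟩, rfl⟩
        exact he
    have himg : ↑(Ms.image Prod.snd) ⊆ subAdjSet E (completeV E M) S' := by
      intro v hv
      simp only [Finset.coe_image, Set.mem_image, Finset.mem_coe, Finset.mem_filter,
        hMs] at hv
      obtain ⟨e, ⟨heM, heS⟩, rfl⟩ := hv
      exact ⟨matchC e heM (hS' heS), e.1, heS, hME (by simpa using heM)⟩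
    calc S'.ncard = (Ms.image Prod.fst).card := by rw [hSeq, Set.ncard_coe_finset]
      _ = Ms.card := Finset.card_image_of_injOn (fun e he e' he' h =>
            h1 _ (Finset.mem_filter.1 he).1 _ (Finset.mem_filter.1 he').1 h)
      _ = (Ms.image Prod.snd).card := (Finset.card_image_of_injOn (fun e he e' he' h =>
            h2 _ (Finset.mem_filter.1 he).1 _ (Finset.mem_filter.1 he').1 h)).symm
      _ = (↑(Ms.image Prod.snd) : Set V).ncard := (Set.ncard_coe_finset _).symm
      _ ≤ (subAdjSet E (completeV E M) S').ncard :=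
            Set.ncard_le_ncard himg (Set.toFinite _)
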